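/- arXiv:1910.03653 — 2 statements merged into one kernel-verified Lean document; each statement's English description precedes it below -/
import Mathlib

section
/- In the setting below, let t < s in [0,T] and let x, x' ∈ ℝ^{nd} with d(x,x') ≤ 1, and let θ_{t,·}(x) and θ_{t,·}(x') be any flows started from x and x' at time t. Then there exists a constant C ≥ 1, depending only on n, d, α, β, the matrix A and the Hölder constant K of F (and not on t, s, x, x'), such that for every i ∈ {1,…,n}: |(θ_{t,s}(x) − θ_{t,s}(x'))_i| ≤ C [ (s−t)^{(1+α(i−1))/α} + d(x,x')^{1+α(i−1)} ]. -/
open MeasureTheory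

/-- The `i`-th d-dimensional block of a point of `ℝ^{nd}`, as a vector of the Euclidean
space `ℝ^d`. -/
noncomputable def blkOf (n d : ℕ) (x : Fin n × Fin d → ℝ) (i : Fin n) :
    EuclideanSpace ℝ (Fin d) :=
  (EuclideanSpace.equiv (Fin d) ℝ).symm (fun a => x (i, a))

private theorem euc_coord_le {d : ℕ} (v : EuclideanSpace ℝ (Fin d)) (a : Fin d) :
    |v a| ≤ ‖v‖ := by
  have h := EuclideanSpace.norm_eq v
  simp only [Real.norm_eq_abs] at h
  rw [h, show |v a| = Real.sqrt (|v a|^2) by rw [Real.sqrt_sq_eq_abs, abs_abs]]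
  apply Real.sqrt_le_sqrt
  exact Finset.single_le_sum (f := fun i => |v i|^2) (fun i _ => sq_nonneg _)
    (Finset.mem_univ a)

private theorem euc_norm_le {d : ℕ} (v : EuclideanSpace ℝ (Fin d)) (M : ℝ)
    (hM : ∀ a, |v a| ≤ M) (h0 : 0 ≤ M) : ‖v‖ ≤ Real.sqrt d * M := by
  have h := EuclideanSpace.norm_eq v
  simp only [Real.norm_eq_abs] at h
  rw [h]
  calc Real.sqrt (∑ a, |v a| ^ 2) ≤ Real.sqrt (∑ _a : Fin d, M^2) := by
        apply Real.sqrt_le_sqrt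
        exact Finset.sum_le_sum fun a _ => pow_le_pow_left₀ (abs_nonneg _) (hM a) 2
    _ = Real.sqrt d * M := by
        rw [Finset.sum_const, Finset.card_univ, Fintype.card_fin, nsmul_eq_mul,
          Real.sqrt_mul (by positivity), Real.sqrt_sq h0]

private theorem two_rpow_bound (a b p : ℝ) (ha : 0 ≤ a) (hb : 0 ≤ b) (hp : 0 ≤ p) :
    (a + b) ^ p ≤ 2 ^ p * (a ^ p + b ^ p) := by
  have hmax : a + b ≤ 2 * max a b := by
    rcases le_total a b with h | h
    · rw [max_eq_right h]; linarith
    · rw [max_eq_left h]; linarith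
  have h0 : (0:ℝ) ≤ max a b := le_max_of_le_left ha
  calc (a+b)^p ≤ (2 * max a b)^p := Real.rpow_le_rpow (by linarith) hmax hp
    _ = 2^p * (max a b)^p := Real.mul_rpow (by norm_num) h0
    _ ≤ 2^p * (a^p + b^p) := by
        have : (max a b)^p ≤ a^p + b^p := by
          rcases max_cases a b with ⟨he, _⟩ | ⟨he, _⟩ <;> rw [he]
          · nlinarith [Real.rpow_nonneg hb p]
          · nlinarith [Real.rpow_nonneg ha p]
        have h2 : (0:ℝ) ≤ 2^p := Real.rpow_nonneg (by norm_num) p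
        nlinarith

/-- the block projection as a continuous linear map -/
noncomputable def blkL (n d : ℕ) (i : Fin n) :
    (Fin n × Fin d → ℝ) →L[ℝ] EuclideanSpace ℝ (Fin d) :=
  LinearMap.toContinuousLinearMap
    { toFun := fun x => blkOf n d x i
      map_add' := fun _ _ => rfl
      map_smul' := fun _ _ => rfl }

private theorem blkL_apply (n d : ℕ) (i : Fin n) (x : Fin n × Fin d → ℝ) :
    blkL n d i x = blkOf n d x i := rfl

private theorem blk_integral (n d : ℕ) (i : Fin n) (f : ℝ → (Fin n × Fin d → ℝ)) (t r : ℝ)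
    (hf : IntervalIntegrable f volume t r) :
    blkOf n d (∫ v in t..r, f v) i = ∫ v in t..r, blkOf n d (f v) i := by
  have h := (blkL n d i).intervalIntegral_comp_comm hf
  simp only [blkL_apply] at h
  exact h.symm

private theorem blk_mulVec_zero (n d : ℕ) (hn : 1 ≤ n)
    (A : Matrix (Fin n × Fin d) (Fin n × Fin d) ℝ)
    (hA : ∀ (i j : Fin n) (a b : Fin d), (j : ℕ) + 1 ≠ (i : ℕ) → A (i, a) (j, b) = 0)
    (w : Fin n × Fin d → ℝ) :
    blkOf n d (A.mulVec w) ⟨0, hn⟩ = 0 := by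
  ext a
  show (A.mulVec w) (⟨0, hn⟩, a) = 0
  rw [Matrix.mulVec, dotProduct]
  apply Finset.sum_eq_zero
  rintro ⟨j, b⟩ -
  rw [hA _ _ _ _ (by simp), zero_mul]

private theorem blk_mulVec_le (n d : ℕ)
    (A : Matrix (Fin n × Fin d) (Fin n × Fin d) ℝ)
    (hA : ∀ (i j : Fin n) (a b : Fin d), (j : ℕ) + 1 ≠ (i : ℕ) → A (i, a) (j, b) = 0)
    (i j0 : Fin n) (hij : (j0 : ℕ) + 1 = (i : ℕ)) (w : Fin n × Fin d → ℝ) :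
    ‖blkOf n d (A.mulVec w) i‖ ≤
      (Real.sqrt d * ∑ p : Fin n × Fin d, ∑ p' : Fin n × Fin d, |A p p'|) *
        ‖blkOf n d w j0‖ := by
  have hbn : (0:ℝ) ≤ ‖blkOf n d w j0‖ := norm_nonneg _
  rw [mul_assoc]
  apply euc_norm_le _ _ _ (by positivity)
  intro a
  show |(A.mulVec w) (i, a)| ≤ _
  rw [Matrix.mulVec, dotProduct]
  calc |∑ p, A (i,a) p * w p| ≤ ∑ p, |A (i,a) p * w p| := Finset.abs_sum_le_sum_abs _ _
    _ ≤ ∑ p, |A (i,a) p| * ‖blkOf n d w j0‖ := by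
        apply Finset.sum_le_sum
        rintro ⟨j, b⟩ -
        rw [abs_mul]
        by_cases hj : j = j0
        · subst hj
          exact mul_le_mul_of_nonneg_left (euc_coord_le (blkOf n d w j) b) (abs_nonneg _)
        · rw [hA _ _ _ _ (fun hc => hj (Fin.ext (by omega)))]
          simp
    _ = (∑ p, |A (i,a) p|) * ‖blkOf n d w j0‖ := by rw [Finset.sum_mul]
    _ ≤ (∑ p : Fin n × Fin d, ∑ p' : Fin n × Fin d, |A p p'|) * ‖blkOf n d w j0‖ := by
        apply mul_le_mul_of_nonneg_right _ hbn
        exact Finset.single_le_sum (f := fun p => ∑ p', |A p p'|)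
          (fun p _ => Finset.sum_nonneg fun p' _ => abs_nonneg _) (Finset.mem_univ (i,a))


private theorem rpow_collapse (u X e qk : ℝ) (hu : 0 ≤ u) (hX : 0 ≤ X) (he : 0 ≤ e)
    (hqk : 0 < qk) (h : u ≤ X ^ qk) : u ^ (e / qk) ≤ X ^ e := by
  have h2 := Real.rpow_le_rpow hu h (div_nonneg he hqk.le)
  rwa [← Real.rpow_mul hX, mul_comm, div_mul_cancel₀ e (ne_of_gt hqk)] at h2

private theorem pow_helper (C0 K1 γ c e p : ℝ) (hC0 : 4 ≤ C0) (hK1 : 1 ≤ K1) (hγ : 0 < γ)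
    (h4 : 4 * K1 ≤ C0 ^ γ) (hc : 0 ≤ c) (hcK : c ≤ K1) (he : e ≤ p - γ) :
    c * C0 ^ e ≤ C0 ^ p / 4 := by
  have hC1 : (1:ℝ) ≤ C0 := by linarith
  have h1 : C0 ^ e ≤ C0 ^ (p - γ) := Real.rpow_le_rpow_of_exponent_le hC1 he
  have h2 : C0 ^ (p - γ) = C0 ^ p / C0 ^ γ := Real.rpow_sub (by linarith) p γ
  have hp0 : (0:ℝ) < C0 ^ p := Real.rpow_pos_of_pos (by linarith) p
  have hK10 : (0:ℝ) < 4 * K1 := by linarith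
  have h3 : C0 ^ p / C0 ^ γ ≤ C0 ^ p / (4 * K1) := by gcongr
  have h5 : C0 ^ e ≤ C0 ^ p / (4 * K1) := (h1.trans_eq h2).trans h3
  calc c * C0 ^ e ≤ K1 * (C0 ^ p / (4 * K1)) :=
        mul_le_mul hcK h5 (Real.rpow_nonneg (by linarith) e) (by linarith)
    _ = C0 ^ p / 4 := by field_simp

private theorem bootstrap {ι : Type*} [Fintype ι] (t s : ℝ) (u g : ℝ → ι → ℝ)
    (hu : ∀ k, ContinuousOn (fun v => u v k) (Set.Icc t s))
    (hg : ∀ k, ContinuousOn (fun v => g v k) (Set.Icc t s))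
    (hinit : ∀ k, u t k < g t k)
    (hstep : ∀ r ∈ Set.Icc t s, (∀ w ∈ Set.Icc t r, ∀ k, u w k ≤ g w k) →
      ∀ k, u r k < g r k) :
    ∀ v ∈ Set.Icc t s, ∀ k, u v k ≤ g v k := by
  intro v hv k
  by_contra hlt
  push_neg at hlt
  set B : Set ℝ := {r | r ∈ Set.Icc t s ∧ ∃ k, g r k ≤ u r k} with hB
  have hBne : B.Nonempty := ⟨v, hv, k, hlt.le⟩
  have hBclosed : IsClosed B := by
    have hBeq : B = ⋃ k, Set.Icc t s ∩ (fun r => u r k - g r k) ⁻¹' Set.Ici 0 := by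
      ext r
      simp only [hB, Set.mem_setOf_eq, Set.mem_iUnion, Set.mem_inter_iff, Set.mem_preimage,
        Set.mem_Ici, sub_nonneg]
      tauto
    rw [hBeq]
    exact isClosed_iUnion_of_finite fun k =>
      ((hu k).sub (hg k)).preimage_isClosed_of_isClosed isClosed_Icc isClosed_Ici
  have hBbdd : BddBelow B := ⟨t, fun r hr => hr.1.1⟩
  set r0 := sInf B with hr0def
  have hr0B : r0 ∈ B := hBclosed.csInf_mem hBne hBbdd
  have hr0 : r0 ∈ Set.Icc t s := hr0B.1
  have hP0 : IsClosed {w | w ∈ Set.Icc t s ∧ ∀ k, u w k ≤ g w k} := by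
    have hPeq : {w | w ∈ Set.Icc t s ∧ ∀ k, u w k ≤ g w k}
        = Set.Icc t s ∩ ⋂ k, (Set.Icc t s ∩ (fun r => u r k - g r k) ⁻¹' Set.Iic 0) := by
      ext r
      simp only [Set.mem_setOf_eq, Set.mem_inter_iff, Set.mem_iInter, Set.mem_preimage,
        Set.mem_Iic, sub_nonpos]
      constructor
      · rintro ⟨h1, h2⟩; exact ⟨h1, fun k => ⟨h1, h2 k⟩⟩
      · rintro ⟨h1, h2⟩; exact ⟨h1, fun k => (h2 k).2⟩
    rw [hPeq]
    exact isClosed_Icc.inter (isClosed_iInter fun k =>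
      ((hu k).sub (hg k)).preimage_isClosed_of_isClosed isClosed_Icc isClosed_Iic)
  have hIco : Set.Ico t r0 ⊆ {w | w ∈ Set.Icc t s ∧ ∀ k, u w k ≤ g w k} := by
    intro w hw
    have hwmem : w ∈ Set.Icc t s := ⟨hw.1, hw.2.le.trans hr0.2⟩
    refine ⟨hwmem, fun k' => ?_⟩
    by_contra hle
    push_neg at hle
    exact absurd (csInf_le hBbdd ⟨hwmem, k', hle.le⟩) (not_le.2 hw.2)
  have hgood : ∀ w ∈ Set.Icc t r0, ∀ k', u w k' ≤ g w k' := by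
    rcases eq_or_lt_of_le hr0.1 with heq | hlt'
    · intro w hw k'
      have hw' : w = t := le_antisymm (heq ▸ hw.2) hw.1
      subst hw'
      exact (hinit k').le
    · intro w hw k'
      have hwc : w ∈ closure (Set.Ico t r0) := by
        rw [closure_Ico (ne_of_lt hlt')]; exact hw
      exact ((closure_minimal hIco hP0) hwc).2 k'
  obtain ⟨k0, hk0⟩ := hr0B.2
  exact absurd (hstep r0 hr0 hgood k0) (not_lt.2 hk0)
/-- The anisotropic distance `d(x,y) = Σ_j |(x-y)_j|^{1/(1+α(j-1))}` on `ℝ^{nd}`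
(`j : Fin n` is 0-indexed, so the exponent reads `1/(1+α j)`). -/
noncomputable def anisoDist (n d : ℕ) (α : ℝ) (x y : Fin n × Fin d → ℝ) : ℝ :=
  ∑ j : Fin n, ‖blkOf n d (x - y) j‖ ^ (1 / (1 + α * (j : ℕ)))

/-- `θ` is a flow started from `x` at time `t`, i.e. a continuous solution on `[t,T]` of
`θ s = x + ∫_t^s (A θ_v + F(v, θ_v)) dv`. -/
def IsFlow (n d : ℕ) (T : ℝ) (A : Matrix (Fin n × Fin d) (Fin n × Fin d) ℝ)
    (F : ℝ → (Fin n × Fin d → ℝ) → (Fin n × Fin d → ℝ)) (t : ℝ)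
    (x : Fin n × Fin d → ℝ) (θ : ℝ → Fin n × Fin d → ℝ) : Prop :=
  ContinuousOn θ (Set.Icc t T) ∧
  ∀ s ∈ Set.Icc t T, θ s = x + ∫ v in t..s, (A.mulVec (θ v) + F v (θ v))

set_option maxHeartbeats 2000000 in
set_option maxRecDepth 100000 in
/-- Componentwise sensitivity of the flows: for any two flows started from `x` and `x'`
at time `t`, and for every level `i`,
`|(θ_{t,s}(x) - θ_{t,s}(x'))_i| ≤ C [(s-t)^{(1+α(i-1))/α} + d(x,x')^{1+α(i-1)}]`,
with `C` depending only on the data `n, d, α, β, A, K`. -/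
theorem flow_componentwise_sensitivity (n d : ℕ) (hn : 1 ≤ n) (hd : 1 ≤ d)
    (α β T : ℝ) (hα : α ∈ Set.Ioo (0 : ℝ) 2) (hβ : β ∈ Set.Ioo (0 : ℝ) 1)
    (hαβ : α + β ∈ Set.Ioo (1 : ℝ) 2) (hβα : β < α) (hT0 : 0 < T) (hT1 : T ≤ 1)
    (A : Matrix (Fin n × Fin d) (Fin n × Fin d) ℝ)
    (hA : ∀ (i j : Fin n) (a b : Fin d), (j : ℕ) + 1 ≠ (i : ℕ) → A (i, a) (j, b) = 0)
    (F : ℝ → (Fin n × Fin d → ℝ) → (Fin n × Fin d → ℝ))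
    (hFc : ContinuousOn (fun p : ℝ × (Fin n × Fin d → ℝ) => F p.1 p.2)
      (Set.Icc 0 T ×ˢ Set.univ))
    (hFstruct : ∀ (i : Fin n) (t : ℝ) (x y : Fin n × Fin d → ℝ),
      (∀ k : Fin n, i ≤ k → blkOf n d x k = blkOf n d y k) →
      blkOf n d (F t x) i = blkOf n d (F t y) i)
    (K : ℝ) (hK : 0 ≤ K)
    (hF1 : ∀ t ∈ Set.Icc (0 : ℝ) T, ∀ x x' : Fin n × Fin d → ℝ,
      ‖blkOf n d (F t x - F t x') ⟨0, hn⟩‖ ≤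
        K * ∑ k : Fin n, ‖blkOf n d (x - x') k‖ ^ (β / (1 + α * (k : ℕ))))
    (hFi : ∀ i : Fin n, 1 ≤ (i : ℕ) → ∀ t ∈ Set.Icc (0 : ℝ) T, ∀ x x' : Fin n × Fin d → ℝ,
      ‖blkOf n d (F t x - F t x') i‖ ≤
        K * ∑ k ∈ Finset.univ.filter (fun k : Fin n => i ≤ k),
          ‖blkOf n d (x - x') k‖ ^ ((1 + α * ((i : ℕ) - 1 : ℝ) + β) / (1 + α * (k : ℕ)))) :
    ∃ C : ℝ, 1 ≤ C ∧
      ∀ t s : ℝ, t ∈ Set.Icc 0 T → s ∈ Set.Icc 0 T → t < s →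
      ∀ x x' : Fin n × Fin d → ℝ, anisoDist n d α x x' ≤ 1 →
      ∀ θ θ' : ℝ → Fin n × Fin d → ℝ,
        IsFlow n d T A F t x θ → IsFlow n d T A F t x' θ' →
        ∀ i : Fin n,
          ‖blkOf n d (θ s - θ' s) i‖ ≤
            C * ((s - t) ^ ((1 + α * (i : ℕ)) / α) +
              anisoDist n d α x x' ^ (1 + α * (i : ℕ))) := by
  obtain ⟨hα0, hα2⟩ := hα
  obtain ⟨hβ0, hβ1⟩ := hβ
  obtain ⟨hαβ1, hαβ2⟩ := hαβ
  -- basic exponent facts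
  have hq1 : ∀ i : Fin n, (1:ℝ) ≤ 1 + α * (i : ℕ) := by
    intro i
    have : (0:ℝ) ≤ α * (i : ℕ) := by positivity
    linarith
  have hq0 : ∀ i : Fin n, (0:ℝ) < 1 + α * (i : ℕ) := fun i => lt_of_lt_of_le one_pos (hq1 i)
  have hqtop : ∀ i : Fin n, (1:ℝ) + α * (i : ℕ) ≤ 1 + 2 * n := by
    intro i
    have h1 : ((i : ℕ) : ℝ) ≤ (n : ℝ) := by exact_mod_cast (i.is_lt).le
    have h2 : (0:ℝ) ≤ ((i:ℕ):ℝ) := Nat.cast_nonneg _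
    nlinarith
  -- constants
  set SA : ℝ := ∑ p : Fin n × Fin d, ∑ p' : Fin n × Fin d, |A p p'| with hSAdef
  have hSA0 : 0 ≤ SA := Finset.sum_nonneg fun p _ => Finset.sum_nonneg fun p' _ => abs_nonneg _
  set CA : ℝ := Real.sqrt d * SA with hCAdef
  have hCA0 : 0 ≤ CA := mul_nonneg (Real.sqrt_nonneg _) hSA0
  set K1 : ℝ := CA + 3 * K * n + 1 with hK1def
  have hK1 : 1 ≤ K1 := by
    have : (0:ℝ) ≤ 3 * K * n := by positivity
    simp only [hK1def]; linarith
  set γ : ℝ := min (α - β) (1 - β) with hγdef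
  have hγ0 : 0 < γ := lt_min (by linarith) (by linarith)
  have hγ1 : γ ≤ 1 := le_trans (min_le_right _ _) (by linarith)
  have hγα : γ ≤ α - β := min_le_left _ _
  have hγβ : γ ≤ 1 - β := min_le_right _ _
  set C0 : ℝ := max 4 ((4 * K1) ^ (1/γ)) with hC0def
  have hC04 : (4:ℝ) ≤ C0 := le_max_left _ _
  have hC01 : (1:ℝ) ≤ C0 := by linarith
  have hC00 : (0:ℝ) < C0 := by linarith
  have hC0γ : 4 * K1 ≤ C0 ^ γ := by
    have h1 : (4 * K1) ^ (1/γ) ≤ C0 := le_max_right _ _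
    have h2 : ((4 * K1) ^ (1/γ)) ^ γ ≤ C0 ^ γ :=
      Real.rpow_le_rpow (Real.rpow_nonneg (by linarith) _) h1 hγ0.le
    rwa [← Real.rpow_mul (by linarith), one_div, inv_mul_cancel₀ (ne_of_gt hγ0),
      Real.rpow_one] at h2
  clear_value SA CA K1 γ C0
  refine ⟨(2 * C0) ^ ((1:ℝ) + 2 * n), Real.one_le_rpow (by linarith) (by positivity), ?_⟩
  intro t s ht hs hts x x' hDle θ θ' hθ hθ'
  set D := anisoDist n d α x x' with hDdef
  have hD0 : 0 ≤ D := by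
    rw [hDdef]; unfold anisoDist
    exact Finset.sum_nonneg fun j _ => Real.rpow_nonneg (norm_nonneg _) _
  have hinitb : ∀ k : Fin n, ‖blkOf n d (x - x') k‖ ≤ D ^ (1 + α * (k : ℕ)) := by
    intro k
    have h1 : ‖blkOf n d (x - x') k‖ ^ (1/(1 + α * (k : ℕ))) ≤ D := by
      rw [hDdef]; unfold anisoDist
      exact Finset.single_le_sum
        (f := fun j : Fin n => ‖blkOf n d (x - x') j‖ ^ (1/(1 + α * (j : ℕ))))
        (fun j _ => Real.rpow_nonneg (norm_nonneg _) _) (Finset.mem_univ k)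
    have h2 := Real.rpow_le_rpow (Real.rpow_nonneg (norm_nonneg _) _) h1 (hq0 k).le
    rwa [← Real.rpow_mul (norm_nonneg _), one_div, inv_mul_cancel₀ (ne_of_gt (hq0 k)),
      Real.rpow_one] at h2
  clear_value D
  have hsT : s ≤ T := hs.2
  have htT : t ≤ T := hts.le.trans hsT
  have ht0 : 0 ≤ t := ht.1
  have hIccsub : Set.Icc t T ⊆ Set.Icc (0:ℝ) T := fun v hv => ⟨ht0.trans hv.1, hv.2⟩
  have hIccs : Set.Icc t s ⊆ Set.Icc t T := Set.Icc_subset_Icc_right hsT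
  have hmvc : Continuous fun w : Fin n × Fin d → ℝ => A.mulVec w :=
    LinearMap.continuous_of_finiteDimensional (Matrix.mulVecLin A)
  have hGc : ∀ ψ : ℝ → Fin n × Fin d → ℝ, ContinuousOn ψ (Set.Icc t T) →
      ContinuousOn (fun v => A.mulVec (ψ v) + F v (ψ v)) (Set.Icc t T) := by
    intro ψ hψ
    have h2 : ContinuousOn (fun v => F v (ψ v)) (Set.Icc t T) := by
      apply hFc.comp (continuousOn_id.prodMk hψ)
      intro v hv
      exact ⟨hIccsub hv, trivial⟩
    exact (hmvc.comp_continuousOn hψ).add h2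
  set G : ℝ → Fin n × Fin d → ℝ :=
    fun v => (A.mulVec (θ v) + F v (θ v)) - (A.mulVec (θ' v) + F v (θ' v)) with hGdef
  have hGcont : ContinuousOn G (Set.Icc t T) := (hGc θ hθ.1).sub (hGc θ' hθ'.1)
  have hGint : ∀ r ∈ Set.Icc t T, IntervalIntegrable G MeasureTheory.volume t r := by
    intro r hr
    apply ContinuousOn.intervalIntegrable
    apply hGcont.mono
    rw [Set.uIcc_of_le hr.1]
    exact Set.Icc_subset_Icc_right hr.2
  have hInt : ∀ ψ : ℝ → Fin n × Fin d → ℝ, ContinuousOn ψ (Set.Icc t T) → ∀ r ∈ Set.Icc t T,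
      IntervalIntegrable (fun v => A.mulVec (ψ v) + F v (ψ v)) MeasureTheory.volume t r := by
    intro ψ hψ r hr
    apply ContinuousOn.intervalIntegrable
    apply (hGc ψ hψ).mono
    rw [Set.uIcc_of_le hr.1]
    exact Set.Icc_subset_Icc_right hr.2
  have hδeq : ∀ r ∈ Set.Icc t T, θ r - θ' r = (x - x') + ∫ v in t..r, G v := by
    intro r hr
    rw [hθ.2 r hr, hθ'.2 r hr, hGdef,
      intervalIntegral.integral_sub (hInt θ hθ.1 r hr) (hInt θ' hθ'.1 r hr)]
    abel
  have hθt : θ t = x := by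
    have h := hθ.2 t ⟨le_refl t, htT⟩
    simpa [intervalIntegral.integral_same] using h
  have hθ't : θ' t = x' := by
    have h := hθ'.2 t ⟨le_refl t, htT⟩
    simpa [intervalIntegral.integral_same] using h
  have hublk : ∀ r ∈ Set.Icc t s, ∀ i : Fin n, ‖blkOf n d (θ r - θ' r) i‖ ≤
      ‖blkOf n d (x - x') i‖ + ∫ v in t..r, ‖blkOf n d (G v) i‖ := by
    intro r hr i
    have hrT : r ∈ Set.Icc t T := hIccs hr
    rw [hδeq r hrT]
    have heq : blkOf n d ((x - x') + ∫ v in t..r, G v) i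
        = blkOf n d (x - x') i + blkOf n d (∫ v in t..r, G v) i := rfl
    rw [heq, blk_integral n d i G t r (hGint r hrT)]
    exact (norm_add_le _ _).trans (add_le_add le_rfl
      (intervalIntegral.norm_integral_le_integral_norm hr.1))
  have hucont : ∀ k : Fin n,
      ContinuousOn (fun v => ‖blkOf n d (θ v - θ' v) k‖) (Set.Icc t s) := by
    intro k
    have h1 : ContinuousOn (fun v => θ v - θ' v) (Set.Icc t s) :=
      (hθ.1.mono hIccs).sub (hθ'.1.mono hIccs)
    exact ((blkL n d k).continuous.comp_continuousOn h1).norm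
  have hrpowc : ∀ c : ℝ, 0 < c → Continuous fun y : ℝ => y ^ c := by
    intro c hc
    rw [continuous_iff_continuousAt]
    intro y
    exact Real.continuousAt_rpow_const y c (Or.inr hc.le)
  have hGsplit : ∀ v, G v = A.mulVec (θ v - θ' v) + (F v (θ v) - F v (θ' v)) := by
    intro v
    rw [hGdef]
    simp only [Matrix.mulVec_sub]
    abel
  have hblkG : ∀ v, ∀ j : Fin n, blkOf n d (G v) j =
      blkOf n d (A.mulVec (θ v - θ' v)) j + blkOf n d (F v (θ v) - F v (θ' v)) j := by
    intro v j
    rw [hGsplit v]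
    rfl
  clear_value G
  have key : ∀ ε : ℝ, 0 < ε → ε ≤ 1 → ∀ v ∈ Set.Icc t s, ∀ i : Fin n,
      ‖blkOf n d (θ v - θ' v) i‖ ≤
        (C0 * ((v - t) ^ (1/α) + D + ε)) ^ (1 + α * (i : ℕ)) := by
    intro ε hε0 hε1
    apply bootstrap t s (fun v k => ‖blkOf n d (θ v - θ' v) k‖)
      (fun v k => (C0 * ((v - t) ^ (1/α) + D + ε)) ^ (1 + α * (k : ℕ))) hucont
    · -- continuity of g
      intro k
      apply Continuous.continuousOn
      exact (hrpowc _ (hq0 k)).comp (continuous_const.mul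
        ((((hrpowc _ (by positivity)).comp (continuous_id.sub continuous_const)).add
          continuous_const).add continuous_const))
    · -- initial
      intro k
      have hzero : (t - t : ℝ) ^ (1/α) = 0 := by
        rw [sub_self, Real.zero_rpow (by positivity)]
      rw [hθt, hθ't, hzero, zero_add]
      calc ‖blkOf n d (x - x') k‖ ≤ D ^ (1 + α * (k : ℕ)) := hinitb k
        _ ≤ (D + ε) ^ (1 + α * (k : ℕ)) :=
            Real.rpow_le_rpow hD0 (by linarith only [hε0]) (hq0 k).le
        _ < (C0 * (D + ε)) ^ (1 + α * (k : ℕ)) := by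
            apply Real.rpow_lt_rpow (by linarith only [hD0, hε0]) _ (hq0 k)
            exact (lt_mul_iff_one_lt_left (by linarith only [hD0, hε0])).2
              (by linarith only [hC04])
    · -- step
      intro r hr Hw i
      have hrt : t ≤ r := hr.1
      have hrs : r ≤ s := hr.2
      have hrT : r ∈ Set.Icc t T := hIccs hr
      have hrt0 : 0 ≤ r - t := sub_nonneg.2 hrt
      have hr01 : r - t ≤ 1 := by linarith only [hrT.2, hT1, ht0]
      set H : ℝ := (r - t) ^ (1/α) + D + ε with hHdef
      have hrpow1 : (r - t) ^ (1/α) ≤ 1 := Real.rpow_le_one hrt0 hr01 (by positivity)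
      have hrpow0 : 0 ≤ (r - t) ^ (1/α) := Real.rpow_nonneg hrt0 _
      have hH0 : 0 < H := by rw [hHdef]; linarith only [hrpow0, hD0, hε0]
      have hH3 : H ≤ 3 := by rw [hHdef]; linarith only [hrpow1, hDle, hε1]
      have hHD : D ≤ H := by rw [hHdef]; linarith only [hrpow0, hε0]
      clear_value H
      have hCH0 : 0 < C0 * H := by positivity
      have hmono : ∀ v ∈ Set.Icc t r, ∀ k : Fin n,
          ‖blkOf n d (θ v - θ' v) k‖ ≤ (C0 * H) ^ (1 + α * (k : ℕ)) := by
        intro v hv k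
        have hvt0 : (0:ℝ) ≤ v - t := sub_nonneg.2 hv.1
        have hb0 : (0:ℝ) ≤ (v - t) ^ (1/α) := Real.rpow_nonneg hvt0 _
        refine (Hw v hv k).trans ?_
        apply Real.rpow_le_rpow (mul_nonneg hC00.le (by linarith only [hb0, hD0, hε0]))
          _ (hq0 k).le
        have h1 : (v - t) ^ (1/α) ≤ (r - t) ^ (1/α) :=
          Real.rpow_le_rpow hvt0 (by linarith only [hv.2]) (by positivity)
        apply mul_le_mul_of_nonneg_left _ hC00.le
        rw [hHdef]; linarith only [h1]
      have hrtH : r - t ≤ H ^ α := by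
        have h1 : ((r - t) ^ (1/α)) ^ α = r - t := by
          rw [← Real.rpow_mul hrt0, one_div, inv_mul_cancel₀ (ne_of_gt hα0), Real.rpow_one]
        rw [← h1]
        apply Real.rpow_le_rpow hrpow0 _ hα0.le
        rw [hHdef]; linarith only [hD0, hε0]
      have hGnormint : IntervalIntegrable (fun v => ‖blkOf n d (G v) i‖)
          MeasureTheory.volume t r := by
        apply ContinuousOn.intervalIntegrable
        apply ContinuousOn.norm
        apply (blkL n d i).continuous.comp_continuousOn
        apply hGcont.mono
        rw [Set.uIcc_of_le hrt]
        exact Set.Icc_subset_Icc_right hrT.2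
      have hvT : ∀ v ∈ Set.Icc t r, v ∈ Set.Icc (0:ℝ) T :=
        fun v hv => ⟨ht0.trans hv.1, hv.2.trans hrT.2⟩
      by_cases hi0 : (i : ℕ) = 0
      · -- lowest level
        have hieq : i = ⟨0, hn⟩ := Fin.ext (by simpa using hi0)
        subst hieq
        have hq01 : (1 : ℝ) + α * (((⟨0, hn⟩ : Fin n) : ℕ) : ℝ) = 1 := by norm_num
        have hptw : ∀ v ∈ Set.Icc t r, ‖blkOf n d (G v) (⟨0, hn⟩ : Fin n)‖ ≤
            K * n * (C0 * H) ^ β := by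
          intro v hv
          rw [hblkG v, blk_mulVec_zero n d hn A hA, zero_add]
          calc ‖blkOf n d (F v (θ v) - F v (θ' v)) (⟨0, hn⟩ : Fin n)‖
              ≤ K * ∑ k : Fin n, ‖blkOf n d (θ v - θ' v) k‖ ^ (β / (1 + α * (k : ℕ))) :=
                hF1 v (hvT v hv) (θ v) (θ' v)
            _ ≤ K * ∑ _k : Fin n, (C0 * H) ^ β := by
                apply mul_le_mul_of_nonneg_left _ hK
                apply Finset.sum_le_sum
                intro k _
                exact rpow_collapse _ _ _ _ (norm_nonneg _) hCH0.le hβ0.le (hq0 k)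
                  (hmono v hv k)
            _ = K * n * (C0 * H) ^ β := by
                rw [Finset.sum_const, Finset.card_univ, Fintype.card_fin, nsmul_eq_mul]
                ring
        have hIb : (∫ v in t..r, ‖blkOf n d (G v) (⟨0, hn⟩ : Fin n)‖) ≤
            (r - t) * (K * n * (C0 * H) ^ β) := by
          have h1 := intervalIntegral.integral_mono_on hrt hGnormint
            intervalIntegrable_const hptw
          rwa [intervalIntegral.integral_const, smul_eq_mul] at h1
        have hstep1 : ‖blkOf n d (θ r - θ' r) (⟨0, hn⟩ : Fin n)‖ ≤
            D + (r - t) * (K * n * (C0 * H) ^ β) := by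
          have h2 := (hublk r hr _).trans (add_le_add (hinitb (⟨0, hn⟩ : Fin n)) hIb)
          rwa [hq01, Real.rpow_one] at h2
        have hexp : H ^ α * (K * n * (C0 * H) ^ β) = K * n * C0 ^ β * (H ^ (α + β)) := by
          rw [Real.mul_rpow hC00.le hH0.le, Real.rpow_add hH0]
          ring
        have hHαβ : H ^ (α + β) ≤ 3 * H := by
          have h1 : H ^ (α + β) = H ^ (1:ℝ) * H ^ (α + β - 1) := by
            rw [← Real.rpow_add hH0]; norm_num
          have h2 : H ^ (α + β - 1) ≤ 3 ^ (α + β - 1) :=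
            Real.rpow_le_rpow hH0.le hH3 (by linarith)
          have h3 : (3:ℝ) ^ (α + β - 1) ≤ 3 := by
            calc (3:ℝ) ^ (α + β - 1) ≤ 3 ^ (1:ℝ) :=
                  Real.rpow_le_rpow_of_exponent_le (by norm_num) (by linarith)
              _ = 3 := Real.rpow_one 3
          rw [h1, Real.rpow_one]
          have h4 : H ^ (α + β - 1) ≤ 3 := h2.trans h3
          have h5 := mul_le_mul_of_nonneg_left h4 hH0.le
          linarith only [h5]
        have hKb : 3 * (K * n) * C0 ^ β ≤ C0 / 4 := by
          have h5 := pow_helper C0 K1 γ (3 * (K * n)) β 1 hC04 hK1 hγ0 hC0γ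
            (by positivity) (by rw [hK1def]; linarith only [hCA0]) (by linarith only [hγβ])
          rwa [Real.rpow_one] at h5
        have hfin : ‖blkOf n d (θ r - θ' r) (⟨0, hn⟩ : Fin n)‖ ≤ H * (C0 / 2) := by
          have ha : (r - t) * (K * n * (C0 * H) ^ β) ≤ K * n * C0 ^ β * (H ^ (α + β)) := by
            rw [← hexp]
            exact mul_le_mul_of_nonneg_right hrtH (by positivity)
          have hb : K * n * C0 ^ β * (H ^ (α + β)) ≤ K * n * C0 ^ β * (3 * H) :=
            mul_le_mul_of_nonneg_left hHαβ (by positivity)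
          have hc : K * n * C0 ^ β * (3 * H) = (3 * (K * n) * C0 ^ β) * H := by ring
          have hdd : (3 * (K * n) * C0 ^ β) * H ≤ (C0 / 4) * H :=
            mul_le_mul_of_nonneg_right hKb hH0.le
          have he : D ≤ (C0 / 4) * H := by
            have h6 := mul_le_mul_of_nonneg_right
              (show (1:ℝ) ≤ C0/4 by linarith only [hC04]) hH0.le
            linarith only [hHD, h6]
          linarith only [hstep1, ha, hb, hc, hdd, he]
        rw [hq01, Real.rpow_one]
        calc ‖blkOf n d (θ r - θ' r) (⟨0, hn⟩ : Fin n)‖ ≤ H * (C0 / 2) := hfin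
          _ < C0 * H := by
              have h7 := mul_lt_mul_of_pos_left
                (show C0/2 < C0 by linarith only [hC00]) hH0
              linarith only [h7]
      · -- higher levels
        have hi1 : 1 ≤ (i : ℕ) := Nat.one_le_iff_ne_zero.2 hi0
        have hj0lt : (i : ℕ) - 1 < n := by omega
        set j0 : Fin n := ⟨(i : ℕ) - 1, hj0lt⟩ with hj0def
        have hij : (j0 : ℕ) + 1 = (i : ℕ) := by
          simp only [hj0def]
          omega
        have hcast : ((j0 : ℕ) : ℝ) = ((i : ℕ) : ℝ) - 1 := by
          simp only [hj0def]
          push_cast [Nat.cast_sub hi1]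
          ring
        set p1 : ℝ := 1 + α * (((i : ℕ) : ℝ) - 1) with hp1def
        have hir1 : (1:ℝ) ≤ ((i : ℕ) : ℝ) := by exact_mod_cast hi1
        have hp11 : 1 ≤ p1 := by
          rw [hp1def]
          have h6 := mul_nonneg hα0.le (sub_nonneg.2 hir1)
          linarith only [h6]
        have hp1q : p1 = (1 + α * ((i : ℕ) : ℝ)) - α := by rw [hp1def]; ring
        have hqj0 : (1 : ℝ) + α * ((j0 : ℕ) : ℝ) = p1 := by rw [hcast, hp1def]
        set qi : ℝ := 1 + α * ((i : ℕ) : ℝ) with hqidef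
        have hqi1 : 1 ≤ qi := hq1 i
        have hqi0 : 0 < qi := hq0 i
        clear_value j0 p1 qi
        have hptw : ∀ v ∈ Set.Icc t r, ‖blkOf n d (G v) i‖ ≤
            CA * (C0 * H) ^ p1 + K * n * (C0 * H) ^ (p1 + β) := by
          intro v hv
          rw [hblkG v i]
          refine (norm_add_le _ _).trans (add_le_add ?_ ?_)
          · refine (blk_mulVec_le n d A hA i j0 hij (θ v - θ' v)).trans ?_
            rw [← hSAdef, ← hCAdef]
            have h1 := hmono v hv j0
            rw [hqj0] at h1
            exact mul_le_mul_of_nonneg_left h1 hCA0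
          · refine (hFi i hi1 v (hvT v hv) (θ v) (θ' v)).trans ?_
            have hnum : (1 + α * (((i : ℕ) : ℝ) - 1) + β) = p1 + β := by rw [hp1def]
            rw [hnum]
            calc K * ∑ k ∈ Finset.univ.filter (fun k : Fin n => i ≤ k),
                  ‖blkOf n d (θ v - θ' v) k‖ ^ ((p1 + β) / (1 + α * (k : ℕ)))
                ≤ K * ∑ _k ∈ Finset.univ.filter (fun k : Fin n => i ≤ k), (C0 * H) ^ (p1 + β) := by
                  apply mul_le_mul_of_nonneg_left _ hK
                  apply Finset.sum_le_sum
                  intro k _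
                  exact rpow_collapse _ _ _ _ (norm_nonneg _) hCH0.le (by linarith) (hq0 k)
                    (hmono v hv k)
              _ ≤ K * ∑ _k : Fin n, (C0 * H) ^ (p1 + β) := by
                  apply mul_le_mul_of_nonneg_left _ hK
                  apply Finset.sum_le_sum_of_subset_of_nonneg (Finset.filter_subset _ _)
                  intro k _ _
                  positivity
              _ = K * n * (C0 * H) ^ (p1 + β) := by
                  rw [Finset.sum_const, Finset.card_univ, Fintype.card_fin, nsmul_eq_mul]
                  ring
        have hIb : (∫ v in t..r, ‖blkOf n d (G v) i‖) ≤
            (r - t) * (CA * (C0 * H) ^ p1 + K * n * (C0 * H) ^ (p1 + β)) := by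
          have h1 := intervalIntegral.integral_mono_on hrt hGnormint
            intervalIntegrable_const hptw
          rwa [intervalIntegral.integral_const, smul_eq_mul] at h1
        have hstep1 : ‖blkOf n d (θ r - θ' r) i‖ ≤
            D ^ qi + (r - t) * (CA * (C0 * H) ^ p1 + K * n * (C0 * H) ^ (p1 + β)) :=
          (hublk r hr i).trans (add_le_add (by rw [hqidef]; exact hinitb i) hIb)
        -- bound the integral term
        have hM0 : 0 ≤ CA * (C0 * H) ^ p1 + K * n * (C0 * H) ^ (p1 + β) := by positivity
        have ha : (r - t) * (CA * (C0 * H) ^ p1 + K * n * (C0 * H) ^ (p1 + β)) ≤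
            H ^ α * (CA * (C0 * H) ^ p1 + K * n * (C0 * H) ^ (p1 + β)) :=
          mul_le_mul_of_nonneg_right hrtH hM0
        have hexp1 : H ^ α * (CA * (C0 * H) ^ p1) = CA * C0 ^ p1 * H ^ qi := by
          rw [Real.mul_rpow hC00.le hH0.le]
          have : H ^ α * (CA * (C0 ^ p1 * H ^ p1)) = CA * C0 ^ p1 * (H ^ α * H ^ p1) := by ring
          rw [this, ← Real.rpow_add hH0]
          have hae : α + p1 = qi := by rw [hp1q]; ring
          rw [hae]
        have hexp2 : H ^ α * (K * n * (C0 * H) ^ (p1 + β)) =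
            K * n * C0 ^ (p1 + β) * (H ^ qi * H ^ β) := by
          rw [Real.mul_rpow hC00.le hH0.le]
          have h1 : H ^ α * (K * n * (C0 ^ (p1+β) * H ^ (p1+β))) =
              K * n * C0 ^ (p1+β) * (H ^ α * H ^ (p1+β)) := by ring
          rw [h1, ← Real.rpow_add hH0]
          have hae : α + (p1 + β) = qi + β := by rw [hp1q]; ring
          rw [hae, Real.rpow_add hH0]
        have hHβ3 : H ^ β ≤ 3 := by
          calc H ^ β ≤ 3 ^ β := Real.rpow_le_rpow hH0.le hH3 hβ0.le
            _ ≤ (3:ℝ) ^ (1:ℝ) := Real.rpow_le_rpow_of_exponent_le (by norm_num) (by linarith)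
            _ = 3 := Real.rpow_one 3
        have hqipos : 0 < H ^ qi := Real.rpow_pos_of_pos hH0 qi
        have hb1 : CA * C0 ^ p1 ≤ C0 ^ qi / 4 :=
          pow_helper C0 K1 γ CA p1 qi hC04 hK1 hγ0 hC0γ hCA0
            (by rw [hK1def]
                have h6 : (0:ℝ) ≤ 3 * K * n := by positivity
                linarith only [h6])
            (by rw [hp1q]; linarith only [hγα, hβ0])
        have hb2 : 3 * (K * n) * C0 ^ (p1 + β) ≤ C0 ^ qi / 4 :=
          pow_helper C0 K1 γ (3 * (K * n)) (p1 + β) qi hC04 hK1 hγ0 hC0γ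
            (by positivity) (by rw [hK1def]; linarith only [hCA0])
            (by rw [hp1q]; linarith only [hγα])
        have hb3 : (1:ℝ) ≤ C0 ^ qi / 4 := by
          have h5 := pow_helper C0 K1 γ 1 0 qi hC04 hK1 hγ0 hC0γ (by norm_num)
            hK1 (by linarith only [hqi1, hγ1])
          rwa [Real.rpow_zero, mul_one] at h5
        have hDqi : D ^ qi ≤ H ^ qi := Real.rpow_le_rpow hD0 hHD hqi0.le
        have hfin : ‖blkOf n d (θ r - θ' r) i‖ ≤ (3 * (C0 ^ qi / 4)) * H ^ qi := by
          have hc1 : H ^ α * (CA * (C0 * H) ^ p1) ≤ (C0 ^ qi / 4) * H ^ qi := by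
            rw [hexp1]
            exact mul_le_mul_of_nonneg_right hb1 hqipos.le
          have hc2 : H ^ α * (K * n * (C0 * H) ^ (p1 + β)) ≤ (C0 ^ qi / 4) * H ^ qi := by
            rw [hexp2]
            have h1 : K * n * C0 ^ (p1+β) * (H ^ qi * H ^ β) ≤
                K * n * C0 ^ (p1+β) * (H ^ qi * 3) := by
              apply mul_le_mul_of_nonneg_left _ (by positivity)
              exact mul_le_mul_of_nonneg_left hHβ3 hqipos.le
            have h2 : K * n * C0 ^ (p1+β) * (H ^ qi * 3) =
                (3 * (K * n) * C0 ^ (p1+β)) * H ^ qi := by ring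
            have h3 : (3 * (K * n) * C0 ^ (p1+β)) * H ^ qi ≤ (C0 ^ qi / 4) * H ^ qi :=
              mul_le_mul_of_nonneg_right hb2 hqipos.le
            linarith
          have hc3 : D ^ qi ≤ (C0 ^ qi / 4) * H ^ qi := by
            have h6 := mul_le_mul_of_nonneg_right hb3 hqipos.le
            linarith only [hDqi, h6]
          have hc4 : H ^ α * (CA * (C0 * H) ^ p1 + K * n * (C0 * H) ^ (p1 + β)) =
              H ^ α * (CA * (C0 * H) ^ p1) + H ^ α * (K * n * (C0 * H) ^ (p1 + β)) := by
            ring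
          linarith only [hstep1, ha, hc1, hc2, hc3, hc4]
        have hfin2 : (3 * (C0 ^ qi / 4)) * H ^ qi < (C0 * H) ^ qi := by
          rw [Real.mul_rpow hC00.le hH0.le]
          have h1 : 0 < C0 ^ qi := Real.rpow_pos_of_pos hC00 qi
          have h6 := mul_pos h1 hqipos
          linarith only [h6]
        exact lt_of_le_of_lt hfin hfin2
  -- pass to the limit ε → 0 and conclude
  intro i
  set qi : ℝ := 1 + α * ((i : ℕ) : ℝ) with hqidef
  have hqi0 : 0 < qi := hq0 i
  have hqi1 : 1 ≤ qi := hq1 i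
  clear_value qi
  have hst0 : 0 ≤ s - t := sub_nonneg.2 hts.le
  have ha0 : 0 ≤ (s - t) ^ (1/α) := Real.rpow_nonneg hst0 _
  have hf : ContinuousAt (fun ε : ℝ => (C0 * ((s - t) ^ (1/α) + D + ε)) ^ qi) 0 := by
    apply Continuous.continuousAt
    exact (hrpowc _ hqi0).comp (continuous_const.mul
      ((continuous_const.add continuous_const).add continuous_id))
  have hev : ∀ᶠ ε in nhdsWithin 0 (Set.Ioi 0),
      ‖blkOf n d (θ s - θ' s) i‖ ≤ (C0 * ((s - t) ^ (1/α) + D + ε)) ^ qi := by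
    filter_upwards [Ioc_mem_nhdsGT_of_mem (Set.mem_Ico.mpr ⟨le_refl (0:ℝ), one_pos⟩)]
      with ε hε
    rw [hqidef]
    exact key ε hε.1 hε.2 s (Set.right_mem_Icc.2 hts.le) i
  have hlim : Filter.Tendsto (fun ε : ℝ => (C0 * ((s - t) ^ (1/α) + D + ε)) ^ qi)
      (nhdsWithin 0 (Set.Ioi 0)) (nhds ((C0 * ((s - t) ^ (1/α) + D + 0)) ^ qi)) :=
    hf.tendsto.mono_left nhdsWithin_le_nhds
  have hkey0 : ‖blkOf n d (θ s - θ' s) i‖ ≤ (C0 * ((s - t) ^ (1/α) + D + 0)) ^ qi :=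
    ge_of_tendsto hlim hev
  rw [add_zero] at hkey0
  have h1 : (C0 * ((s - t) ^ (1/α) + D)) ^ qi = C0 ^ qi * ((s - t) ^ (1/α) + D) ^ qi :=
    Real.mul_rpow hC00.le (by positivity)
  have h2 : ((s - t) ^ (1/α) + D) ^ qi ≤ 2 ^ qi * (((s - t) ^ (1/α)) ^ qi + D ^ qi) :=
    two_rpow_bound _ _ _ ha0 hD0 hqi0.le
  have h3 : ((s - t) ^ (1/α)) ^ qi = (s - t) ^ (qi / α) := by
    rw [← Real.rpow_mul hst0, one_div, inv_mul_eq_div]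
  have h4 : (2 * C0) ^ qi ≤ (2 * C0) ^ ((1:ℝ) + 2 * n) :=
    Real.rpow_le_rpow_of_exponent_le (by linarith only [hC01])
      (by rw [hqidef]; exact hqtop i)
  have h5 : C0 ^ qi * (2 ^ qi * (((s - t) ^ (1/α)) ^ qi + D ^ qi)) =
      (2 * C0) ^ qi * (((s - t) ^ (1/α)) ^ qi + D ^ qi) := by
    rw [Real.mul_rpow (by norm_num) hC00.le]
    ring
  have hsum0 : 0 ≤ ((s - t) ^ (1/α)) ^ qi + D ^ qi := by positivity
  calc ‖blkOf n d (θ s - θ' s) i‖ ≤ (C0 * ((s - t) ^ (1/α) + D)) ^ qi := hkey0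
    _ = C0 ^ qi * ((s - t) ^ (1/α) + D) ^ qi := h1
    _ ≤ C0 ^ qi * (2 ^ qi * (((s - t) ^ (1/α)) ^ qi + D ^ qi)) := by
        apply mul_le_mul_of_nonneg_left h2 (Real.rpow_nonneg hC00.le qi)
    _ = (2 * C0) ^ qi * (((s - t) ^ (1/α)) ^ qi + D ^ qi) := h5
    _ ≤ (2 * C0) ^ ((1:ℝ) + 2 * n) * (((s - t) ^ (1/α)) ^ qi + D ^ qi) :=
        mul_le_mul_of_nonneg_right h4 hsum0
    _ = (2 * C0) ^ ((1:ℝ) + 2 * n) * ((s - t) ^ (qi / α) + D ^ qi) := by rw [h3]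
end

section
/- Let n, d ≥ 1 be integers, α ∈ (0,2), and let A be an nd×nd real matrix whose d×d blocks A_{i,j} vanish unless j = i−1 (sub-diagonal block structure). For h > 0 let M_h denote the block-diagonal nd×nd matrix whose i-th d×d diagonal block is h^{i−1} I_{d×d}. Then there exists a constant C, depending only on A, n, d and α, such that for every h > 0 and every w = (w_1,…,w_n) ∈ ℝ^{nd} satisfying |w_j| ≤ h^{(1+α(j−1))/α} for every j ∈ {1,…,n}, one has |M_h^{−1} e^{Ah} w| ≤ C h^{1/α}. In particular, if x, x' ∈ ℝ^{nd} satisfy Σ_{j=1}^n |(x−x')_j|^{1/(1+α(j−1))} ≤ (s−t)^{1/α} for some s > t, then |M_{s−t}^{−1} e^{A(s−t)} (x − x')| ≤ C (s−t)^{1/α}. -/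
/-- The Euclidean norm of a point of `ℝ^{nd}`. -/
noncomputable def enorm (n d : ℕ) (v : Fin n × Fin d → ℝ) : ℝ :=
  ‖(EuclideanSpace.equiv (Fin n × Fin d) ℝ).symm v‖

/-- The block-diagonal scaling matrix `M_h` whose `i`-th d×d diagonal block is `h^{i-1} I`. -/
noncomputable def scaleMat (n d : ℕ) (h : ℝ) :
    Matrix (Fin n × Fin d) (Fin n × Fin d) ℝ :=
  Matrix.diagonal (fun p => h ^ (p.1 : ℕ))

lemma abs_coord_le_blk (n d : ℕ) (w : Fin n × Fin d → ℝ) (j : Fin n) (b : Fin d) :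
    |w (j, b)| ≤ ‖blkOf n d w j‖ := by
  rw [blkOf, EuclideanSpace.norm_eq]
  rw [← Real.sqrt_sq_eq_abs]
  apply Real.sqrt_le_sqrt
  have := Finset.single_le_sum (f := fun a : Fin d => ‖((EuclideanSpace.equiv (Fin d) ℝ).symm (fun a => w (j, a)) : EuclideanSpace ℝ (Fin d)) a‖ ^ 2)
    (fun a _ => by positivity) (Finset.mem_univ b)
  simpa using this

lemma enorm_le (n d : ℕ) (v : Fin n × Fin d → ℝ) (K : ℝ) (hK : 0 ≤ K)
    (hb : ∀ p, |v p| ≤ K) : enorm n d v ≤ Real.sqrt (n * d) * K := by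
  rw [_root_.enorm, EuclideanSpace.norm_eq]
  have h1 : ∑ p : Fin n × Fin d, ‖((EuclideanSpace.equiv (Fin n × Fin d) ℝ).symm v : EuclideanSpace ℝ (Fin n × Fin d)) p‖ ^ 2 ≤ ∑ _p : Fin n × Fin d, K ^ 2 := by
    apply Finset.sum_le_sum
    intro p _
    have h2 : |v p| ^ 2 ≤ K ^ 2 := by
      have := hb p
      nlinarith [abs_nonneg (v p)]
    simpa [Real.norm_eq_abs] using h2
  calc Real.sqrt (∑ p : Fin n × Fin d, ‖((EuclideanSpace.equiv (Fin n × Fin d) ℝ).symm v : EuclideanSpace ℝ (Fin n × Fin d)) p‖ ^ 2)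
      ≤ Real.sqrt (∑ _p : Fin n × Fin d, K ^ 2) := Real.sqrt_le_sqrt h1
    _ = Real.sqrt ((n * d : ℝ) * K ^ 2) := by
        congr 1
        rw [Finset.sum_const, Finset.card_univ, Fintype.card_prod, Fintype.card_fin,
          Fintype.card_fin, nsmul_eq_mul]
        push_cast
        ring
    _ = Real.sqrt (n * d) * K := by
        rw [Real.sqrt_mul (by positivity), Real.sqrt_sq hK]

/-- For a sub-diagonal block matrix `A`: if `|w_j| ≤ h^{(1+α(j-1))/α}` for every block `j`,
then `|M_h⁻¹ e^{Ah} w| ≤ C h^{1/α}`; in particular if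
`Σ_j |(x-x')_j|^{1/(1+α(j-1))} ≤ (s-t)^{1/α}` then
`|M_{s-t}⁻¹ e^{A(s-t)} (x-x')| ≤ C (s-t)^{1/α}`. -/
theorem scaleMat_inv_exp_bound (n d : ℕ) (hn : 1 ≤ n) (hd : 1 ≤ d)
    (α : ℝ) (hα : α ∈ Set.Ioo (0 : ℝ) 2)
    (A : Matrix (Fin n × Fin d) (Fin n × Fin d) ℝ)
    (hA : ∀ (i j : Fin n) (a b : Fin d), (j : ℕ) + 1 ≠ (i : ℕ) → A (i, a) (j, b) = 0) :
    ∃ C : ℝ, 0 < C ∧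
      (∀ h : ℝ, 0 < h → ∀ w : Fin n × Fin d → ℝ,
        (∀ j : Fin n, ‖blkOf n d w j‖ ≤ h ^ ((1 + α * (j : ℕ)) / α)) →
        enorm n d ((scaleMat n d h)⁻¹.mulVec
          ((NormedSpace.exp (h • A)).mulVec w)) ≤ C * h ^ (1 / α)) ∧
      ∀ s t : ℝ, t < s → ∀ x x' : Fin n × Fin d → ℝ,
        (∑ j : Fin n, ‖blkOf n d (x - x') j‖ ^ (1 / (1 + α * (j : ℕ)))) ≤
          (s - t) ^ (1 / α) →
        enorm n d ((scaleMat n d (s - t))⁻¹.mulVec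
          ((NormedSpace.exp ((s - t) • A)).mulVec (x - x'))) ≤ C * (s - t) ^ (1 / α) := by
  obtain ⟨hα0, hα2⟩ := hα
  set B := NormedSpace.exp A with hB
  set S : ℝ := ∑ p : Fin n × Fin d, ∑ q : Fin n × Fin d, |B p q| with hS
  have hS0 : 0 ≤ S := Finset.sum_nonneg fun _ _ => Finset.sum_nonneg fun _ _ => abs_nonneg _
  set C : ℝ := Real.sqrt (n * d) * S + 1 with hC
  have hC0 : 0 < C := by positivity
  have main : ∀ h : ℝ, 0 < h → ∀ w : Fin n × Fin d → ℝ,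
      (∀ j : Fin n, ‖blkOf n d w j‖ ≤ h ^ ((1 + α * (j : ℕ)) / α)) →
      enorm n d ((scaleMat n d h)⁻¹.mulVec
        ((NormedSpace.exp (h • A)).mulVec w)) ≤ C * h ^ (1 / α) := by
    intro h hh w hw
    set M := scaleMat n d h with hM
    set N : Matrix (Fin n × Fin d) (Fin n × Fin d) ℝ :=
      Matrix.diagonal (fun p => (h ^ (p.1 : ℕ))⁻¹) with hN
    have hMN : M * N = 1 := by
      rw [hM, hN, scaleMat, Matrix.diagonal_mul_diagonal]
      have : (fun p : Fin n × Fin d => h ^ (p.1 : ℕ) * (h ^ (p.1 : ℕ))⁻¹)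
          = fun _ => (1 : ℝ) := funext fun p => mul_inv_cancel₀ (pow_ne_zero _ hh.ne')
      rw [this, Matrix.diagonal_one]
    have hNM : N * M = 1 := by
      rw [hM, hN, scaleMat, Matrix.diagonal_mul_diagonal]
      have : (fun p : Fin n × Fin d => (h ^ (p.1 : ℕ))⁻¹ * h ^ (p.1 : ℕ))
          = fun _ => (1 : ℝ) := funext fun p => inv_mul_cancel₀ (pow_ne_zero _ hh.ne')
      rw [this, Matrix.diagonal_one]
    have hMinv : M⁻¹ = N := Matrix.inv_eq_right_inv hMN
    have hkey : (h • A) * M = M * A := by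
      ext p q
      rw [hM, scaleMat, Matrix.mul_diagonal, Matrix.diagonal_mul]
      simp only [Matrix.smul_apply, smul_eq_mul]
      obtain ⟨i, a⟩ := p
      obtain ⟨j, b⟩ := q
      by_cases hij : (j : ℕ) + 1 = (i : ℕ)
      · simp only []
        rw [← hij]
        ring
      · rw [hA i j a b hij]
        ring
    have hconj : h • A = M * A * N := by
      have h2 : (h • A) * (M * N) = M * A * N := by
        rw [← mul_assoc, hkey]
      rwa [hMN, mul_one] at h2
    let U : (Matrix (Fin n × Fin d) (Fin n × Fin d) ℝ)ˣ := ⟨M, N, hMN, hNM⟩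
    have hexp : NormedSpace.exp (h • A) = M * B * N := by
      rw [hconj]
      exact Matrix.exp_units_conj U A
    have hvec : (scaleMat n d h)⁻¹.mulVec ((NormedSpace.exp (h • A)).mulVec w)
        = B.mulVec (N.mulVec w) := by
      rw [← hM, hMinv, hexp, Matrix.mulVec_mulVec, Matrix.mulVec_mulVec]
      rw [← mul_assoc, ← mul_assoc, hNM, one_mul]
    rw [hvec]
    have hv : ∀ p : Fin n × Fin d, |(N.mulVec w) p| ≤ h ^ (1 / α) := by
      intro p
      obtain ⟨j, b⟩ := p
      have hp : (N.mulVec w) (j, b) = (h ^ (j : ℕ))⁻¹ * w (j, b) := by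
        rw [hN]
        exact Matrix.mulVec_diagonal _ _ _
      rw [hp, abs_mul, abs_inv, abs_pow, abs_of_pos hh]
      have hw1 : |w (j, b)| ≤ h ^ (1 / α) * h ^ (j : ℕ) := by
        refine (abs_coord_le_blk n d w j b).trans ((hw j).trans_eq ?_)
        have e1 : (1 + α * (j : ℕ)) / α = 1 / α + (j : ℕ) := by
          field_simp
        rw [e1, Real.rpow_add hh, Real.rpow_natCast]
      calc (h ^ (j : ℕ))⁻¹ * |w (j, b)|
          ≤ (h ^ (j : ℕ))⁻¹ * (h ^ (1 / α) * h ^ (j : ℕ)) := by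
            exact mul_le_mul_of_nonneg_left hw1 (by positivity)
        _ = h ^ (1 / α) := by
            field_simp
    have hBv : ∀ p : Fin n × Fin d, |(B.mulVec (N.mulVec w)) p| ≤ S * h ^ (1 / α) := by
      intro p
      have hrow : ∑ q : Fin n × Fin d, |B p q| ≤ S := by
        rw [hS]
        exact Finset.single_le_sum
          (f := fun r : Fin n × Fin d => ∑ q : Fin n × Fin d, |B r q|)
          (fun r _ => Finset.sum_nonneg fun _ _ => abs_nonneg _) (Finset.mem_univ p)
      calc |(B.mulVec (N.mulVec w)) p|
          = |∑ q : Fin n × Fin d, B p q * (N.mulVec w) q| := by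
            simp [Matrix.mulVec, dotProduct]
        _ ≤ ∑ q : Fin n × Fin d, |B p q * (N.mulVec w) q| :=
            Finset.abs_sum_le_sum_abs _ _
        _ ≤ ∑ q : Fin n × Fin d, |B p q| * h ^ (1 / α) := by
            refine Finset.sum_le_sum fun q _ => ?_
            rw [abs_mul]
            exact mul_le_mul_of_nonneg_left (hv q) (abs_nonneg _)
        _ = (∑ q : Fin n × Fin d, |B p q|) * h ^ (1 / α) := by
            rw [Finset.sum_mul]
        _ ≤ S * h ^ (1 / α) :=
            mul_le_mul_of_nonneg_right hrow (Real.rpow_nonneg hh.le _)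
    calc enorm n d (B.mulVec (N.mulVec w))
        ≤ Real.sqrt (n * d) * (S * h ^ (1 / α)) :=
          enorm_le n d _ _ (by positivity) hBv
      _ = (Real.sqrt (n * d) * S) * h ^ (1 / α) := by ring
      _ ≤ C * h ^ (1 / α) := by
          apply mul_le_mul_of_nonneg_right _ (Real.rpow_nonneg hh.le _)
          rw [hC]
          linarith
  refine ⟨C, hC0, main, ?_⟩
  intro s t hts x x' hsum
  have hst : 0 < s - t := sub_pos.mpr hts
  apply main _ hst
  intro j
  have hpj : (0 : ℝ) < 1 + α * (j : ℕ) := by positivity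
  have h1 : ‖blkOf n d (x - x') j‖ ^ (1 / (1 + α * (j : ℕ))) ≤ (s - t) ^ (1 / α) := by
    refine le_trans ?_ hsum
    exact Finset.single_le_sum
      (f := fun i : Fin n => ‖blkOf n d (x - x') i‖ ^ (1 / (1 + α * (i : ℕ))))
      (fun i _ => Real.rpow_nonneg (norm_nonneg _) _) (Finset.mem_univ j)
  have h2 := Real.rpow_le_rpow (Real.rpow_nonneg (norm_nonneg _) _) h1 hpj.le
  rw [← Real.rpow_mul (norm_nonneg _), one_div_mul_cancel hpj.ne', Real.rpow_one,
    ← Real.rpow_mul hst.le] at h2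
  convert h2 using 2
  ring
end
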